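/- Let L be a first-order language and let M₀ and M be L-structures. Then the following are equivalent: (a) player II has no winning strategy in the embedding game G(M₀, M); (b) there exists a nonempty set S of positions of G(M₀, M), closed under initial segments, such that: (i) for every σ ∈ S of even length there is some x ∈ M₀ with σ⌢x ∈ S; (ii) for every σ ∈ S of odd length and every y ∈ M, either σ⌢y is an immediate loss for player II or σ⌢y ∈ S; and (iii) S is wellfounded, i.e., S has no infinite branch. -/

import Mathlib

open FirstOrder Language Cardinal Set

universe u

/-- "There is a generic elementary embedding of `M₀` into `M`": player II has a winning
strategy in the embedding game `G(M₀, M)`, in which in round `n` player I plays `xₙ ∈ M₀` and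
player II replies `yₙ ∈ M`, and player II wins a run iff for every `n` and every formula
`φ(v₀, …, vₙ)`, `M₀ ⊨ φ(x₀, …, xₙ) ↔ M ⊨ φ(y₀, …, yₙ)`. -/
def IsGenericEmbeddable (L : FirstOrder.Language.{u, u}) (M₀ M : Type u) [L.Structure M₀]
    [L.Structure M] : Prop :=
  ∃ σ : (n : ℕ) → (Fin (n + 1) → M₀) → M,
    ∀ (x : ℕ → M₀) (n : ℕ) (φ : L.Formula (Fin (n + 1))),
      φ.Realize (fun i : Fin (n + 1) => x i) ↔
        φ.Realize (fun i : Fin (n + 1) => σ (i : ℕ) (fun j : Fin ((i : ℕ) + 1) => x (j : ℕ)))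

/-- A position of the embedding game `G(M₀, M)`: a finite alternating sequence
`(x₀, y₀, x₁, y₁, …)` of elements of `M₀` and `M` (possibly ending after a move of player I,
so with `n ≤ m ≤ n + 1`), no proper initial segment of which of even length is an immediate
loss for player II (i.e., for every `k` with `2 * (k + 1) < m + n` and every formula
`φ(v₀, …, v_k)`, `M₀ ⊨ φ(x₀, …, x_k) ↔ M ⊨ φ(y₀, …, y_k)`). -/
structure GamePos (L : FirstOrder.Language.{u, u}) (M₀ M : Type u) [L.Structure M₀]
    [L.Structure M] where
  m : ℕ
  n : ℕ
  hnm : n ≤ m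
  hmn : m ≤ n + 1
  x : Fin m → M₀
  y : Fin n → M
  notLost : ∀ k : ℕ, (hk : 2 * (k + 1) < m + n) → ∀ φ : L.Formula (Fin (k + 1)),
    (φ.Realize fun i : Fin (k + 1) => x ⟨i, by have := i.isLt; omega⟩) ↔
      (φ.Realize fun i : Fin (k + 1) => y ⟨i, by have := i.isLt; omega⟩)

variable {L : FirstOrder.Language.{u, u}} {M₀ M : Type u} [L.Structure M₀] [L.Structure M]

/-- `p` is an initial segment of the position `q`. -/
def GamePos.Prefix (p q : GamePos L M₀ M) : Prop :=
  ∃ (hm : p.m ≤ q.m) (hn : p.n ≤ q.n),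
    (∀ i : Fin p.m, q.x ⟨i, lt_of_lt_of_le i.isLt hm⟩ = p.x i) ∧
    ∀ i : Fin p.n, q.y ⟨i, lt_of_lt_of_le i.isLt hn⟩ = p.y i

/-- `q` is the position `p⌢a` obtained by appending the player I move `a` to `p`. -/
def GamePos.ExtendI (p : GamePos L M₀ M) (a : M₀) (q : GamePos L M₀ M) : Prop :=
  p.Prefix q ∧ q.m = p.m + 1 ∧ q.n = p.n ∧ ∀ h : p.m < q.m, q.x ⟨p.m, h⟩ = a

/-- `q` is the position `p⌢b` obtained by appending the player II move `b` to `p`. -/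
def GamePos.ExtendII (p : GamePos L M₀ M) (b : M) (q : GamePos L M₀ M) : Prop :=
  p.Prefix q ∧ q.m = p.m ∧ q.n = p.n + 1 ∧ ∀ h : p.n < q.n, q.y ⟨p.n, h⟩ = b

/-- For a position `p` of odd length (`p.m = p.n + 1`) and a player II move `b`, the extended
sequence `p⌢b` is an immediate loss for player II: some formula `φ(v₀, …, v_{p.n})` is
realized by the `x`'s but not by the `y`'s (extended by `b`), or vice versa. -/
def GamePos.LossAfter (p : GamePos L M₀ M) (b : M) : Prop :=
  ∃ φ : L.Formula (Fin p.m),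
    ¬ (φ.Realize p.x ↔
        φ.Realize fun i : Fin p.m => if h : (i : ℕ) < p.n then p.y ⟨i, h⟩ else b)

lemma realize_congr' {α : Type u} [L.Structure α] {k : ℕ} (φ : L.Formula (Fin k))
    {v w : Fin k → α} (h : ∀ i, v i = w i) : φ.Realize v ↔ φ.Realize w :=
  iff_of_eq (congrArg _ (funext h))

lemma GamePos.extEq {p q : GamePos L M₀ M} (hm : p.m = q.m) (hn : p.n = q.n)
    (hx : ∀ i : Fin p.m, q.x ⟨i, by omega⟩ = p.x i)
    (hy : ∀ i : Fin p.n, q.y ⟨i, by omega⟩ = p.y i) : p = q := by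
  rcases p with ⟨m, n, h1, h2, x, y, h3⟩
  rcases q with ⟨m', n', h1', h2', x', y', h3'⟩
  dsimp at hm hn hx hy
  subst hm hn
  have hx' : x' = x := funext fun i => by
    have := hx i; rwa [Fin.eta] at this
  have hy' : y' = y := funext fun i => by
    have := hy i; rwa [Fin.eta] at this
  subst hx' hy'
  rfl



/-- All formulas up to the full `y`-length match. Automatic for odd positions. -/
def GamePos.ExtOK (p : GamePos L M₀ M) : Prop :=
  ∀ k : ℕ, (h : k < p.n) → ∀ φ : L.Formula (Fin (k + 1)),
    (φ.Realize fun i : Fin (k + 1) => p.x ⟨i, by have := i.isLt; have := p.hnm; omega⟩) ↔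
      (φ.Realize fun i : Fin (k + 1) => p.y ⟨i, by have := i.isLt; omega⟩)

lemma GamePos.extOK_of_odd (p : GamePos L M₀ M) (h : p.m = p.n + 1) : p.ExtOK := by
  intro k hk φ
  exact p.notLost k (by omega) φ

def extI (p : GamePos L M₀ M) (h : p.m = p.n) (hE : p.ExtOK) (a : M₀) : GamePos L M₀ M where
  m := p.m + 1
  n := p.n
  hnm := by omega
  hmn := by omega
  x := fun i => if hi : (i : ℕ) < p.m then p.x ⟨i, hi⟩ else a
  y := p.y
  notLost := by
    intro k hk φ
    have hkn : k < p.n := by omega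
    have := hE k hkn φ
    refine Iff.trans (realize_congr' φ (v := _) (w := fun i : Fin (k+1) =>
      p.x ⟨i, by have := i.isLt; have := p.hnm; omega⟩) ?_) this
    intro i
    exact dif_pos (by simp only [Fin.val_mk]; have := i.isLt; omega)

def extII (p : GamePos L M₀ M) (h : p.m = p.n + 1) (b : M) : GamePos L M₀ M where
  m := p.m
  n := p.n + 1
  hnm := by omega
  hmn := by omega
  x := p.x
  y := fun i => if hi : (i : ℕ) < p.n then p.y ⟨i, hi⟩ else b
  notLost := by
    intro k hk φ
    have := p.notLost k (by omega) φ
    refine Iff.trans this (realize_congr' φ ?_)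
    intro i
    have hi : (i : ℕ) < p.n := by have := i.isLt; omega
    simp [hi]

@[simp] lemma extI_m (p : GamePos L M₀ M) (h hE a) : (extI p h hE a).m = p.m + 1 := rfl
@[simp] lemma extI_n (p : GamePos L M₀ M) (h hE a) : (extI p h hE a).n = p.n := rfl
@[simp] lemma extII_m (p : GamePos L M₀ M) (h b) : (extII p h b).m = p.m := rfl
@[simp] lemma extII_n (p : GamePos L M₀ M) (h b) : (extII p h b).n = p.n + 1 := rfl

lemma extI_prefix (p : GamePos L M₀ M) (h hE a) : p.Prefix (extI p h hE a) := by
  refine ⟨by simp, le_rfl, fun i => ?_, fun i => rfl⟩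
  show dite _ _ _ = _
  rw [dif_pos i.isLt]

lemma extI_extendI (p : GamePos L M₀ M) (h hE a) : p.ExtendI a (extI p h hE a) := by
  refine ⟨extI_prefix p h hE a, rfl, rfl, fun hh => ?_⟩
  show dite _ _ _ = _
  rw [dif_neg (by simp only [Fin.val_mk]; omega)]

lemma extII_prefix (p : GamePos L M₀ M) (h b) : p.Prefix (extII p h b) := by
  refine ⟨le_rfl, by simp, fun i => rfl, fun i => ?_⟩
  show dite _ _ _ = _
  rw [dif_pos i.isLt]

lemma extII_extendII (p : GamePos L M₀ M) (h b) : p.ExtendII b (extII p h b) := by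
  refine ⟨extII_prefix p h b, rfl, rfl, fun hh => ?_⟩
  show dite _ _ _ = _
  rw [dif_neg (by simp only [Fin.val_mk]; omega)]

def rootPos (L : FirstOrder.Language.{u, u}) (M₀ M : Type u) [L.Structure M₀] [L.Structure M] :
    GamePos L M₀ M where
  m := 0
  n := 0
  hnm := le_rfl
  hmn := by omega
  x := fun i => i.elim0
  y := fun i => i.elim0
  notLost := by intro k hk; omega

lemma rootPos_prefix (p : GamePos L M₀ M) : (rootPos L M₀ M).Prefix p :=
  ⟨Nat.zero_le _, Nat.zero_le _, fun i => i.elim0, fun i => i.elim0⟩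

lemma GamePos.Prefix.down {p q r : GamePos L M₀ M} (hp : p.Prefix q) (hr : r.Prefix q)
    (hm : p.m ≤ r.m) (hn : p.n ≤ r.n) : p.Prefix r := by
  obtain ⟨hm1, hn1, hx1, hy1⟩ := hp
  obtain ⟨hm2, hn2, hx2, hy2⟩ := hr
  refine ⟨hm, hn, fun i => ?_, fun i => ?_⟩
  · have h1 := hx1 i
    have h2 := hx2 ⟨i, by have := i.isLt; omega⟩
    simp only [Fin.val_mk] at h2 ⊢
    rw [← h1, ← h2]
  · have h1 := hy1 i
    have h2 := hy2 ⟨i, by have := i.isLt; omega⟩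
    simp only [Fin.val_mk] at h2 ⊢
    rw [← h1, ← h2]

lemma GamePos.Prefix.eq {p q : GamePos L M₀ M} (hp : p.Prefix q) (hm : q.m ≤ p.m)
    (hn : q.n ≤ p.n) : p = q := by
  obtain ⟨hm1, hn1, hx, hy⟩ := hp
  exact GamePos.extEq (le_antisymm hm1 hm) (le_antisymm hn1 hn) hx hy

def WinRk (o : Ordinal.{u}) (p : GamePos L M₀ M) : Prop :=
  (∃ (h : p.m = p.n) (hE : p.ExtOK) (a : M₀) (o' : {o' : Ordinal.{u} // o' < o}),
      WinRk o'.1 (extI p h hE a)) ∨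
  (∃ h : p.m = p.n + 1, ∀ b : M,
      p.LossAfter b ∨ ∃ o' : {o' : Ordinal.{u} // o' < o}, WinRk o'.1 (extII p h b))
termination_by o
decreasing_by exacts [o'.2, o'.2]

def Win (p : GamePos L M₀ M) : Prop := ∃ o, WinRk o p

lemma winRk_iff (o : Ordinal.{u}) (p : GamePos L M₀ M) :
    WinRk o p ↔
      ((∃ (h : p.m = p.n) (hE : p.ExtOK) (a : M₀) (o' : Ordinal.{u}), o' < o ∧
          WinRk o' (extI p h hE a)) ∨
      (∃ h : p.m = p.n + 1, ∀ b : M,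
          p.LossAfter b ∨ ∃ o' : Ordinal.{u}, o' < o ∧ WinRk o' (extII p h b))) := by
  rw [WinRk]
  constructor
  · rintro (⟨h, hE, a, ⟨o', ho'⟩, hw⟩ | ⟨h, hb⟩)
    · exact Or.inl ⟨h, hE, a, o', ho', hw⟩
    · refine Or.inr ⟨h, fun b => ?_⟩
      rcases hb b with hl | ⟨⟨o', ho'⟩, hw⟩
      · exact Or.inl hl
      · exact Or.inr ⟨o', ho', hw⟩
  · rintro (⟨h, hE, a, o', ho', hw⟩ | ⟨h, hb⟩)
    · exact Or.inl ⟨h, hE, a, ⟨o', ho'⟩, hw⟩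
    · refine Or.inr ⟨h, fun b => ?_⟩
      rcases hb b with hl | ⟨o', ho', hw⟩
      · exact Or.inl hl
      · exact Or.inr ⟨⟨o', ho'⟩, hw⟩

noncomputable def rk (p : GamePos L M₀ M) : Ordinal.{u} := sInf {o | WinRk o p}

lemma winRk_rk {p : GamePos L M₀ M} (h : Win p) : WinRk (rk p) p :=
  csInf_mem h

lemma rk_le {p : GamePos L M₀ M} {o : Ordinal.{u}} (h : WinRk o p) : rk p ≤ o :=
  csInf_le' h

lemma winRk_mono {p : GamePos L M₀ M} {o o' : Ordinal.{u}} (h : WinRk o p) (ho : o ≤ o') :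
    WinRk o' p := by
  rw [winRk_iff] at h ⊢
  rcases h with ⟨h, hE, a, o'', ho'', hw⟩ | ⟨h, hb⟩
  · exact Or.inl ⟨h, hE, a, o'', lt_of_lt_of_le ho'' ho, hw⟩
  · refine Or.inr ⟨h, fun b => ?_⟩
    rcases hb b with hl | ⟨o'', ho'', hw⟩
    · exact Or.inl hl
    · exact Or.inr ⟨o'', lt_of_lt_of_le ho'' ho, hw⟩

lemma win_even_intro {p : GamePos L M₀ M} (h : p.m = p.n) (hE : p.ExtOK) (a : M₀)
    (hw : Win (extI p h hE a)) : Win p := by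
  obtain ⟨o, ho⟩ := hw
  exact ⟨o + 1, (winRk_iff _ _).2 (Or.inl ⟨h, hE, a, o, lt_add_one o, ho⟩)⟩

lemma win_odd_intro {p : GamePos L M₀ M} (h : p.m = p.n + 1)
    (hw : ∀ b : M, p.LossAfter b ∨ Win (extII p h b)) : Win p := by
  classical
  have hbdd := Ordinal.bddAbove_range.{u, u} (fun b : M => rk (extII p h b))
  obtain ⟨c, hc⟩ := hbdd
  refine ⟨c + 1, (winRk_iff _ _).2 (Or.inr ⟨h, fun b => ?_⟩)⟩
  rcases hw b with hl | ⟨o, ho⟩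
  · exact Or.inl hl
  · refine Or.inr ⟨rk (extII p h b), ?_, winRk_rk ⟨o, ho⟩⟩
    exact lt_of_le_of_lt (hc (Set.mem_range_self b)) (lt_add_one c)

lemma win_even_inv {p : GamePos L M₀ M} (hw : Win p) (h : p.m = p.n) :
    ∃ (hE : p.ExtOK) (a : M₀), Win (extI p h hE a) ∧ rk (extI p h hE a) < rk p := by
  have := (winRk_iff _ _).1 (winRk_rk hw)
  rcases this with ⟨h', hE, a, o', ho', hwin⟩ | ⟨h', _⟩
  · exact ⟨hE, a, ⟨o', hwin⟩, lt_of_le_of_lt (rk_le hwin) ho'⟩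
  · omega

lemma win_odd_inv {p : GamePos L M₀ M} (hw : Win p) (h : p.m = p.n + 1) (b : M) :
    p.LossAfter b ∨ (Win (extII p h b) ∧ rk (extII p h b) < rk p) := by
  have := (winRk_iff _ _).1 (winRk_rk hw)
  rcases this with ⟨h', _⟩ | ⟨h', hb⟩
  · omega
  · rcases hb b with hl | ⟨o', ho', hwin⟩
    · exact Or.inl hl
    · exact Or.inr ⟨⟨o', hwin⟩, lt_of_le_of_lt (rk_le hwin) ho'⟩

def snocD {α : Type u} {n : ℕ} (x : Fin n → α) (a : α) : Fin (n + 1) → α :=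
  fun i => if h : (i : ℕ) < n then x ⟨i, h⟩ else a

def restr {α : Type u} {n : ℕ} (x : Fin (n + 1) → α) : Fin n → α :=
  fun i => x ⟨i, Nat.lt_succ_of_lt i.isLt⟩

def MatchAll (n : ℕ) (x : Fin n → M₀) (y : Fin n → M) : Prop :=
  ∀ k : ℕ, (hk : k < n) → ∀ φ : L.Formula (Fin (k + 1)),
    (φ.Realize fun i : Fin (k + 1) => x ⟨i, by have := i.isLt; omega⟩) ↔
      (φ.Realize fun i : Fin (k + 1) => y ⟨i, by have := i.isLt; omega⟩)

def mkEven (n : ℕ) (x : Fin n → M₀) (y : Fin n → M) (hxy : MatchAll (L := L) n x y) :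
    GamePos L M₀ M :=
  ⟨n, n, le_rfl, by omega, x, y, fun k hk φ => hxy k (by omega) φ⟩

lemma mkEven_extOK (n : ℕ) (x : Fin n → M₀) (y : Fin n → M)
    (hxy : MatchAll (L := L) n x y) :
    (mkEven n x y hxy).ExtOK := fun k hk φ => hxy k hk φ

def GoodSeq (n : ℕ) (x : Fin n → M₀) (y : Fin n → M) : Prop :=
  ∃ hxy : MatchAll (L := L) n x y, ¬ Win (mkEven n x y hxy)

lemma goodSeq_step {n : ℕ} {x : Fin n → M₀} {y : Fin n → M}
    (hg : GoodSeq (L := L) n x y) (a : M₀) :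
    ∃ b : M, GoodSeq (L := L) (n + 1) (snocD x a) (snocD y b) := by
  classical
  obtain ⟨hxy, hnw⟩ := hg
  set p : GamePos L M₀ M := mkEven n x y hxy with hp
  have hE : p.ExtOK := mkEven_extOK n x y hxy
  set q : GamePos L M₀ M := extI p rfl hE a with hqdef
  have hq : ¬ Win q := fun hw => hnw (win_even_intro rfl hE a hw)
  by_contra hb
  push_neg at hb
  apply hq
  apply win_odd_intro (h := rfl)
  intro b
  by_cases hl : q.LossAfter b
  · exact Or.inl hl
  · right
    rw [GamePos.LossAfter] at hl
    push_neg at hl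
    have hM : MatchAll (L := L) (n + 1) (snocD x a) (snocD y b) := by
      intro k hk φ
      rcases Nat.lt_succ_iff_lt_or_eq.1 hk with hk' | hk'
      · have := hxy k hk' φ
        refine Iff.trans (realize_congr' φ ?_) (Iff.trans this (realize_congr' φ ?_))
        · intro i
          have hi : (i : ℕ) < n := by have := i.isLt; omega
          simp [snocD, hi]
        · intro i
          have hi : (i : ℕ) < n := by have := i.isLt; omega
          simp [snocD, hi]
      · subst hk'
        have := hl φ
        refine Iff.trans (realize_congr' φ ?_) (Iff.trans this (realize_congr' φ ?_))
        · intro i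
          rcases i with ⟨iv, hiv⟩
          rfl
        · intro i
          rcases i with ⟨iv, hiv⟩
          rfl
    have hwin : Win (mkEven (n + 1) (snocD x a) (snocD y b) hM) := not_not.1 fun hnwin =>
      hb b ⟨hM, hnwin⟩
    have heq : mkEven (n + 1) (snocD x a) (snocD y b) hM = extII q rfl b := by
      refine GamePos.extEq rfl rfl (fun i => ?_) (fun i => ?_)
      · rcases i with ⟨iv, hiv⟩
        rfl
      · rcases i with ⟨iv, hiv⟩
        rfl
    rw [heq] at hwin
    exact hwin

noncomputable def ys (L : FirstOrder.Language.{u, u}) (M₀ M : Type u) [L.Structure M₀]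
    [L.Structure M] (hM : Nonempty M) : (n : ℕ) → (Fin n → M₀) → (Fin n → M)
  | 0 => fun _ => Fin.elim0
  | (n + 1) => fun x =>
      snocD (ys L M₀ M hM n (restr x))
        (Classical.epsilon fun b =>
          GoodSeq (L := L) (n + 1) x (snocD (ys L M₀ M hM n (restr x)) b))

lemma mkEven_zero_eq_root (x : Fin 0 → M₀) (y : Fin 0 → M) (hxy : MatchAll (L := L) 0 x y) :
    mkEven 0 x y hxy = rootPos L M₀ M := by
  refine GamePos.extEq rfl rfl (fun i => i.elim0) (fun i => i.elim0)

lemma goodSeq_zero (hroot : ¬ Win (rootPos L M₀ M)) (x : Fin 0 → M₀) :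
    GoodSeq (L := L) 0 x (fun i : Fin 0 => (i.elim0 : M)) := by
  refine ⟨fun k hk φ => absurd hk (by omega), ?_⟩
  exact fun hw => hroot (Eq.mp (congrArg Win (mkEven_zero_eq_root (L := L) x _ _)) hw)

lemma snocD_restr {α : Type u} {n : ℕ} (x : Fin (n + 1) → α) :
    snocD (restr x) (x ⟨n, Nat.lt_succ_self n⟩) = x := by
  funext i
  rcases i with ⟨iv, hiv⟩
  by_cases hi : iv < n
  · simp [snocD, restr, hi]
  · have : iv = n := by omega
    subst this
    simp [snocD]

lemma ys_good (hroot : ¬ Win (rootPos L M₀ M)) (hM : Nonempty M) :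
    ∀ (n : ℕ) (x : Fin n → M₀), GoodSeq (L := L) n x (ys L M₀ M hM n x) := by
  intro n
  induction n with
  | zero =>
    intro x
    have : ys L M₀ M hM 0 x = (fun i : Fin 0 => (i.elim0 : M)) := funext fun i => i.elim0
    rw [this]
    exact goodSeq_zero hroot x
  | succ n IH =>
    intro x
    have hstep := goodSeq_step (IH (restr x)) (x ⟨n, Nat.lt_succ_self n⟩)
    rw [snocD_restr x] at hstep
    have := Classical.epsilon_spec hstep
    exact this

lemma ys_coh (hM : Nonempty M) :
    ∀ (n : ℕ) (x : Fin n → M₀) (i : ℕ) (h : i < n),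
      ys L M₀ M hM n x ⟨i, h⟩ =
        ys L M₀ M hM (i + 1) (fun j : Fin (i + 1) => x ⟨j, by have := j.isLt; omega⟩)
          ⟨i, Nat.lt_succ_self i⟩ := by
  intro n
  induction n with
  | zero => intro x i h; omega
  | succ n IH =>
    intro x i h
    by_cases hi : i < n
    · have h1 : ys L M₀ M hM (n + 1) x ⟨i, h⟩ = ys L M₀ M hM n (restr x) ⟨i, hi⟩ := by
        show snocD _ _ _ = _
        simp [snocD, hi]
      rw [h1, IH (restr x) i hi]
      rfl
    · have hin : i = n := by omega
      subst hin
      have h2 : (fun j : Fin (i + 1) => x ⟨j, by have := j.isLt; omega⟩) = x := by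
        funext j
        rcases j with ⟨jv, hjv⟩
        rfl
      rw [h2]

lemma gen_of_not_win (hroot : ¬ Win (rootPos L M₀ M)) : IsGenericEmbeddable L M₀ M := by
  classical
  by_cases h0 : Nonempty M₀
  case neg =>
    refine ⟨fun n x => absurd ⟨x 0⟩ h0, fun x n φ => absurd ⟨x 0⟩ h0⟩
  obtain ⟨a0⟩ := h0
  have good0 : GoodSeq (L := L) 0 (fun i : Fin 0 => (i.elim0 : M₀)) (fun i : Fin 0 => (i.elim0 : M)) :=
    goodSeq_zero hroot _
  obtain ⟨b0, -⟩ := goodSeq_step good0 a0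
  have hM : Nonempty M := ⟨b0⟩
  refine ⟨fun n x => ys L M₀ M hM (n + 1) x ⟨n, Nat.lt_succ_self n⟩, ?_⟩
  intro x n φ
  obtain ⟨hMA, -⟩ := ys_good hroot hM (n + 1) (fun i : Fin (n + 1) => x i)
  have key := hMA n (Nat.lt_succ_self n) φ
  refine Iff.trans (realize_congr' φ ?_) (Iff.trans key (realize_congr' φ ?_))
  · intro i
    rcases i with ⟨iv, hiv⟩
    rfl
  · intro i
    rcases i with ⟨iv, hiv⟩
    have := ys_coh (L := L) (M₀ := M₀) hM (n + 1) (fun j : Fin (n + 1) => x j) iv (by omega)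
    rw [this]

inductive Reach : GamePos L M₀ M → Prop where
  | root (hw : Win (rootPos L M₀ M)) : Reach (rootPos L M₀ M)
  | stepI (p : GamePos L M₀ M) (hp : Reach p) (h : p.m = p.n) (hE : p.ExtOK) (a : M₀)
      (hw : Win (extI p h hE a)) (hlt : rk (extI p h hE a) < rk p) : Reach (extI p h hE a)
  | stepII (p : GamePos L M₀ M) (hp : Reach p) (h : p.m = p.n + 1) (b : M)
      (hw : Win (extII p h b)) (hlt : rk (extII p h b) < rk p) : Reach (extII p h b)

lemma Reach.win {p : GamePos L M₀ M} (hp : Reach p) : Win p := by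
  cases hp with
  | root hw => exact hw
  | stepI p hp h hE a hw hlt => exact hw
  | stepII p hp h b hw hlt => exact hw

lemma prefix_extI_cases {p r : GamePos L M₀ M} {h hE a} (hr : r.Prefix (extI p h hE a)) :
    r = extI p h hE a ∨ r.Prefix p := by
  obtain ⟨hm, hn, -, -⟩ := id hr
  simp only [extI_m, extI_n] at hm hn
  by_cases hrm : r.m ≤ p.m
  · exact Or.inr (hr.down (extI_prefix p h hE a) hrm hn)
  · left
    have h1 : r.m = p.m + 1 := by omega
    have h2 : r.n = p.n := by have := r.hnm; have := r.hmn; omega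
    exact hr.eq (by simp only [extI_m]; omega) (by simp only [extI_n]; omega)

lemma prefix_extII_cases {p r : GamePos L M₀ M} {h b} (hr : r.Prefix (extII p h b)) :
    r = extII p h b ∨ r.Prefix p := by
  obtain ⟨hm, hn, -, -⟩ := id hr
  simp only [extII_m, extII_n] at hm hn
  by_cases hrn : r.n ≤ p.n
  · exact Or.inr (hr.down (extII_prefix p h b) hm hrn)
  · left
    have h1 : r.n = p.n + 1 := by omega
    have h2 : r.m = p.m := by have := r.hnm; have := r.hmn; omega
    exact hr.eq (by simp only [extII_m]; omega) (by simp only [extII_n]; omega)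

lemma reach_prefix {q : GamePos L M₀ M} (hq : Reach q) :
    ∀ p : GamePos L M₀ M, p.Prefix q → Reach p := by
  induction hq with
  | root hw =>
    intro p hp
    have : p = rootPos L M₀ M := hp.eq (Nat.zero_le _) (Nat.zero_le _)
    rw [this]
    exact Reach.root hw
  | stepI p hp h hE a hw hlt IH =>
    intro r hr
    rcases prefix_extI_cases hr with rfl | hr'
    · exact Reach.stepI p hp h hE a hw hlt
    · exact IH r hr'
  | stepII p hp h b hw hlt IH =>
    intro r hr
    rcases prefix_extII_cases hr with rfl | hr'
    · exact Reach.stepII p hp h b hw hlt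
    · exact IH r hr'

lemma reach_rank {q : GamePos L M₀ M} (hq : Reach q) :
    ∀ p : GamePos L M₀ M, p.Prefix q → p.m + p.n < q.m + q.n → rk q < rk p := by
  induction hq with
  | root hw => intro p hp hlen; simp [rootPos] at hlen
  | stepI p hp h hE a hw hlt IH =>
    intro r hr hlen
    rcases prefix_extI_cases hr with rfl | hr'
    · omega
    · rcases Nat.lt_or_ge (r.m + r.n) (p.m + p.n) with hl | hl
      · exact lt_trans hlt (IH r hr' hl)
      · have : r = p := by
          obtain ⟨hm, hn, -, -⟩ := id hr'
          exact hr'.eq (by omega) (by omega)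
        rw [this]
        exact hlt
  | stepII p hp h b hw hlt IH =>
    intro r hr hlen
    rcases prefix_extII_cases hr with rfl | hr'
    · omega
    · rcases Nat.lt_or_ge (r.m + r.n) (p.m + p.n) with hl | hl
      · exact lt_trans hlt (IH r hr' hl)
      · have : r = p := by
          obtain ⟨hm, hn, -, -⟩ := id hr'
          exact hr'.eq (by omega) (by omega)
        rw [this]
        exact hlt


/-- Player II has no winning strategy in the embedding game `G(M₀, M)` if and only if there is
a nonempty set `S` of positions, closed under initial segments, such that: (i) every position
in `S` of even length has an extension by some player I move lying in `S`; (ii) for every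
position in `S` of odd length and every player II move `b`, either appending `b` gives an
immediate loss for player II or the extended position lies in `S`; and (iii) `S` is
wellfounded, i.e., `S` has no infinite branch. -/
theorem not_genericEmbeddable_iff_exists_wellfounded_tree
    (L : FirstOrder.Language.{u, u}) (M₀ M : Type u) [L.Structure M₀] [L.Structure M] :
    ¬ IsGenericEmbeddable L M₀ M ↔
      ∃ S : Set (GamePos L M₀ M),
        S.Nonempty ∧
        (∀ q ∈ S, ∀ p : GamePos L M₀ M, p.Prefix q → p ∈ S) ∧
        (∀ p ∈ S, p.m = p.n → ∃ a : M₀, ∃ q ∈ S, p.ExtendI a q) ∧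
        (∀ p ∈ S, p.m = p.n + 1 → ∀ b : M, p.LossAfter b ∨ ∃ q ∈ S, p.ExtendII b q) ∧
        ¬ ∃ f : ℕ → GamePos L M₀ M, (∀ k, f k ∈ S) ∧
            ∀ k, (f k).Prefix (f (k + 1)) ∧
              (f k).m + (f k).n < (f (k + 1)).m + (f (k + 1)).n := by
  constructor
  · intro hng
    have hw : Win (rootPos L M₀ M) := by
      by_contra hnw
      exact hng (gen_of_not_win hnw)
    refine ⟨{p | Reach p}, ⟨rootPos L M₀ M, Reach.root hw⟩, ?_, ?_, ?_, ?_⟩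
    · intro q hq p hp
      exact reach_prefix hq p hp
    · intro p hpS h
      obtain ⟨hE, a, hwq, hlt⟩ := win_even_inv (Reach.win hpS) h
      exact ⟨a, extI p h hE a, Reach.stepI p hpS h hE a hwq hlt, extI_extendI p h hE a⟩
    · intro p hpS h b
      rcases win_odd_inv (Reach.win hpS) h b with hl | ⟨hwq, hlt⟩
      · exact Or.inl hl
      · exact Or.inr ⟨extII p h b, Reach.stepII p hpS h b hwq hlt, extII_extendII p h b⟩
    · rintro ⟨f, hfS, hf⟩
      have hdesc : ∀ k, rk (f (k + 1)) < rk (f k) := fun k =>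
        reach_rank (hfS (k + 1)) (f k) (hf k).1 (hf k).2
      exact RelEmbedding.not_wellFounded
        (RelEmbedding.natGT (fun k => rk (f k)) hdesc) Ordinal.lt_wf
  · rintro ⟨S, ⟨p0, hp0⟩, hclosed, hI, hII, hwf⟩ ⟨σ, hσ⟩
    classical
    have hroot : rootPos L M₀ M ∈ S := hclosed p0 hp0 _ (rootPos_prefix p0)
    let Inv : GamePos L M₀ M → Prop := fun p =>
      ∀ i : Fin p.n, p.y i = σ (i : ℕ)
        (fun j : Fin ((i : ℕ) + 1) => p.x
          ⟨(j : ℕ), by have := j.isLt; have := i.isLt; have := p.hnm; omega⟩)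
    have H : ∀ s : {p : GamePos L M₀ M // p ∈ S ∧ Inv p},
        ∃ t : {p : GamePos L M₀ M // p ∈ S ∧ Inv p},
          s.1.Prefix t.1 ∧ t.1.m + t.1.n = s.1.m + s.1.n + 1 := by
      rintro ⟨p, hpS, hInv⟩
      rcases (show p.m = p.n ∨ p.m = p.n + 1 by have := p.hnm; have := p.hmn; omega)
        with h | h
      · obtain ⟨a, q, hqS, hpre, hqm, hqn, hxa⟩ := hI p hpS h
        refine ⟨⟨q, hqS, ?_⟩, hpre, show q.m + q.n = p.m + p.n + 1 by omega⟩
        intro i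
        rcases i with ⟨iv, hiv⟩
        have hivp : iv < p.n := by rw [hqn] at hiv; omega
        obtain ⟨hm, hn, hx, hy⟩ := id hpre
        have h1 : q.y ⟨iv, hiv⟩ = p.y ⟨iv, hivp⟩ := hy ⟨iv, hivp⟩
        rw [h1, hInv ⟨iv, hivp⟩]
        exact congrArg (σ iv) (funext fun j =>
          (hx ⟨(j : ℕ), by have := j.isLt; have := p.hnm; omega⟩).symm)
      · set v : Fin (p.n + 1) → M₀ :=
          fun j => p.x ⟨(j : ℕ), by have := j.isLt; omega⟩ with hv
        set b : M := σ p.n v with hbdef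
        rcases hII p hpS h b with hl | ⟨q, hqS, hpre, hqm, hqn, hyb⟩
        · exfalso
          obtain ⟨φ, hφ⟩ := hl
          apply hφ
          have hr := hσ (fun k => if hk : k < p.m then p.x ⟨k, hk⟩ else p.x ⟨0, by omega⟩)
            p.n (φ.relabel (Fin.cast (show p.m = p.n + 1 by omega)))
          rw [Formula.realize_relabel, Formula.realize_relabel] at hr
          refine Iff.trans (realize_congr' φ fun i => ?_)
            (Iff.trans hr (realize_congr' φ fun i => ?_))
          · rcases i with ⟨iv, hiv⟩
            show p.x ⟨iv, hiv⟩ = if hk : iv < p.m then p.x ⟨iv, hk⟩ else p.x ⟨0, by omega⟩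
            rw [dif_pos hiv]
          · rcases i with ⟨iv, hiv⟩
            show σ iv (fun j : Fin (iv + 1) =>
                if hk : (j : ℕ) < p.m then p.x ⟨(j : ℕ), hk⟩ else p.x ⟨0, by omega⟩) =
              if h' : iv < p.n then p.y ⟨iv, h'⟩ else b
            by_cases hi : iv < p.n
            · rw [dif_pos hi, hInv ⟨iv, hi⟩]
              exact congrArg (σ iv) (funext fun j => dif_pos (by have := j.isLt; omega))
            · have hieq : iv = p.n := by omega
              subst hieq
              rw [dif_neg hi, hbdef]
              exact congrArg (σ p.n) (funext fun j => dif_pos (by have := j.isLt; omega))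
        · refine ⟨⟨q, hqS, ?_⟩, hpre, show q.m + q.n = p.m + p.n + 1 by omega⟩
          intro i
          rcases i with ⟨iv, hiv⟩
          obtain ⟨hm, hn, hx, hy⟩ := id hpre
          by_cases hi : iv < p.n
          · have h1 : q.y ⟨iv, hiv⟩ = p.y ⟨iv, hi⟩ := hy ⟨iv, hi⟩
            rw [h1, hInv ⟨iv, hi⟩]
            exact congrArg (σ iv) (funext fun j =>
              (hx ⟨(j : ℕ), by have := j.isLt; have := p.hnm; omega⟩).symm)
          · have hieq : iv = p.n := by omega
            subst hieq
            have h1 : q.y ⟨p.n, hiv⟩ = b := hyb (by omega)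
            rw [h1, hbdef]
            exact congrArg (σ p.n) (funext fun j =>
              (hx ⟨(j : ℕ), by have := j.isLt; omega⟩).symm)
    choose step hstep using H
    let g : ℕ → {p : GamePos L M₀ M // p ∈ S ∧ Inv p} :=
      fun k => step^[k] ⟨rootPos L M₀ M, hroot, fun i => i.elim0⟩
    refine hwf ⟨fun k => (g k).1, fun k => (g k).2.1, fun k => ?_⟩
    have hg : g (k + 1) = step (g k) := Function.iterate_succ_apply' step k _
    show ((g k : GamePos L M₀ M)).Prefix (g (k + 1) : GamePos L M₀ M) ∧
      (g k : GamePos L M₀ M).m + (g k : GamePos L M₀ M).n <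
        (g (k + 1) : GamePos L M₀ M).m + (g (k + 1) : GamePos L M₀ M).n
    rw [hg]
    exact ⟨(hstep (g k)).1, by have := (hstep (g k)).2; omega⟩
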